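/- Let d ≥ 1 and p > 0. For f : ℤ^d → ℝ define the seminorm [f]_p := sup_{ℓ ∈ ℤ^d \ {0}} (|ℓ|_∞ − 1/2)^p |f(ℓ)|, and define the coarsened function f⁺(ℓ) := ∑_{λ ∈ ℤ^d, |λ − 3ℓ|_∞ ≤ 1} f(λ). If [f]_p < ∞, then [f⁺]_p ≤ 3^{d−p} [f]_p. -/

import Mathlib

/-- The maximum (ℓ^∞) norm of a lattice point `ℓ ∈ ℤ^d`, as a real number. -/
noncomputable def supnorm {d : ℕ} (ℓ : Fin d → ℤ) : ℝ :=
  ((Finset.univ.sup fun i => (ℓ i).natAbs : ℕ) : ℝ)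

/-- The coarsened function `f⁺(ℓ) = ∑_{|λ − 3ℓ|_∞ ≤ 1} f(λ)`. -/
noncomputable def coarsen {d : ℕ} (f : (Fin d → ℤ) → ℝ) (ℓ : Fin d → ℤ) : ℝ :=
  ∑ μ ∈ Fintype.piFinset (fun _ : Fin d => ({-1, 0, 1} : Finset ℤ)),
    f (fun i => 3 * ℓ i + μ i)

lemma natAbs_le_supnorm {d : ℕ} (ℓ : Fin d → ℤ) (i : Fin d) :
    ((ℓ i).natAbs : ℝ) ≤ supnorm ℓ := by
  exact_mod_cast Nat.cast_le.mpr (Finset.le_sup (f := fun i => (ℓ i).natAbs)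
    (Finset.mem_univ i))

lemma supnorm_ge_one {d : ℕ} {ℓ : Fin d → ℤ} (h : ℓ ≠ 0) : 1 ≤ supnorm ℓ := by
  obtain ⟨i, hi⟩ := Function.ne_iff.mp h
  have h1 : (1 : ℝ) ≤ ((ℓ i).natAbs : ℝ) := by
    have : 1 ≤ (ℓ i).natAbs := by
      exact Int.natAbs_pos.mpr hi
    exact_mod_cast this
  exact h1.trans (natAbs_le_supnorm ℓ i)

lemma supnorm_shift {d : ℕ} (ℓ μ : Fin d → ℤ)
    (hμ : ∀ i, μ i = -1 ∨ μ i = 0 ∨ μ i = 1) :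
    3 * supnorm ℓ - 1 ≤ supnorm (fun i => 3 * ℓ i + μ i) := by
  rcases Nat.eq_zero_or_pos d with hd | hd
  · subst hd
    simp [supnorm]
  · haveI : Nonempty (Fin d) := Fin.pos_iff_nonempty.mp hd
    have hne : (Finset.univ : Finset (Fin d)).Nonempty := Finset.univ_nonempty
    obtain ⟨i, _, hi⟩ := Finset.exists_mem_eq_sup Finset.univ hne
      (fun i => (ℓ i).natAbs)
    have key : 3 * (ℓ i).natAbs ≤ (3 * ℓ i + μ i).natAbs + 1 := by
      rcases hμ i with h | h | h <;> omega
    have h1 : ((3 * ℓ i + μ i).natAbs : ℝ) ≤ supnorm (fun i => 3 * ℓ i + μ i) :=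
      natAbs_le_supnorm (fun j => 3 * ℓ j + μ j) i
    have h2 : supnorm ℓ = ((ℓ i).natAbs : ℝ) := by
      simp [supnorm, hi]
    have key' : 3 * ((ℓ i).natAbs : ℝ) ≤ ((3 * ℓ i + μ i).natAbs : ℝ) + 1 := by
      exact_mod_cast key
    linarith

/-- **Contraction of the decay seminorm under coarsening**: with
`[f]_p := sup_{ℓ ≠ 0} (|f|_∞ − 1/2)^p |f(ℓ)|` (finite by assumption, i.e. the defining set
is bounded above), one has `[f⁺]_p ≤ 3^{d−p} [f]_p`. -/
theorem stmt2 (d : ℕ) (hd : 1 ≤ d) (p : ℝ) (hp : 0 < p) (f : (Fin d → ℤ) → ℝ)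
    (hb : BddAbove {x : ℝ | ∃ ℓ : Fin d → ℤ, ℓ ≠ 0 ∧ x = (supnorm ℓ - 1 / 2) ^ p * |f ℓ|}) :
    sSup {x : ℝ | ∃ ℓ : Fin d → ℤ, ℓ ≠ 0 ∧ x = (supnorm ℓ - 1 / 2) ^ p * |coarsen f ℓ|}
      ≤ 3 ^ ((d : ℝ) - p) *
        sSup {x : ℝ | ∃ ℓ : Fin d → ℤ, ℓ ≠ 0 ∧ x = (supnorm ℓ - 1 / 2) ^ p * |f ℓ|} := by
  set S := {x : ℝ | ∃ ℓ : Fin d → ℤ, ℓ ≠ 0 ∧ x = (supnorm ℓ - 1 / 2) ^ p * |f ℓ|} with hS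
  set M := sSup S with hM
  have hMnonneg : 0 ≤ M := by
    have hℓ0 : (fun _ : Fin d => (1 : ℤ)) ≠ 0 := by
      intro h
      have := congrFun h ⟨0, hd⟩
      simp at this
    have hx : (supnorm (fun _ : Fin d => (1 : ℤ)) - 1 / 2) ^ p
        * |f (fun _ : Fin d => (1 : ℤ))| ∈ S := ⟨_, hℓ0, rfl⟩
    have h1 : (1 : ℝ) ≤ supnorm (fun _ : Fin d => (1 : ℤ)) := supnorm_ge_one hℓ0
    have hxnn : 0 ≤ (supnorm (fun _ : Fin d => (1 : ℤ)) - 1 / 2) ^ p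
        * |f (fun _ : Fin d => (1 : ℤ))| :=
      mul_nonneg (Real.rpow_nonneg (by linarith) p) (abs_nonneg _)
    exact hxnn.trans (le_csSup hb hx)
  have hRHSnn : 0 ≤ 3 ^ ((d : ℝ) - p) * M :=
    mul_nonneg (Real.rpow_nonneg (by norm_num) _) hMnonneg
  apply Real.sSup_le _ hRHSnn
  rintro x ⟨ℓ, hℓ, rfl⟩
  set b := supnorm ℓ - 1 / 2 with hbdef
  have hb1 : (1 : ℝ) ≤ supnorm ℓ := supnorm_ge_one hℓ
  have hbpos : 0 < b := by simp only [hbdef]; linarith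
  have key : ∀ μ ∈ Fintype.piFinset (fun _ : Fin d => ({-1, 0, 1} : Finset ℤ)),
      b ^ p * |f (fun i => 3 * ℓ i + μ i)| ≤ 3 ^ (-p) * M := by
    intro μ hμmem
    have hμ : ∀ i, μ i = -1 ∨ μ i = 0 ∨ μ i = 1 := by
      intro i
      have := Fintype.mem_piFinset.mp hμmem i
      simpa using this
    set lam := fun i => 3 * ℓ i + μ i with hlam
    have hshift : 3 * supnorm ℓ - 1 ≤ supnorm lam := supnorm_shift ℓ μ hμ
    have hlb : 3 * b ≤ supnorm lam - 1 / 2 := by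
      simp only [hbdef]; linarith
    have hlamne : lam ≠ 0 := by
      intro h
      have : supnorm lam = 0 := by
        simp [supnorm, h]
      rw [this] at hlb
      linarith
    have hmem : (supnorm lam - 1 / 2) ^ p * |f lam| ∈ S := ⟨lam, hlamne, rfl⟩
    have hle : (supnorm lam - 1 / 2) ^ p * |f lam| ≤ M := le_csSup hb hmem
    have h3b : (3 * b) ^ p * |f lam| ≤ (supnorm lam - 1 / 2) ^ p * |f lam| :=
      mul_le_mul_of_nonneg_right
        (Real.rpow_le_rpow (by linarith) hlb hp.le) (abs_nonneg _)
    have hmul : (3 : ℝ) ^ p * (b ^ p * |f lam|) = (3 * b) ^ p * |f lam| := by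
      rw [Real.mul_rpow (by norm_num) hbpos.le, mul_assoc]
    have h3p : (0 : ℝ) < (3 : ℝ) ^ p := Real.rpow_pos_of_pos (by norm_num) p
    rw [Real.rpow_neg (by norm_num : (0:ℝ) ≤ 3), inv_mul_eq_div, le_div_iff₀ h3p]
    calc b ^ p * |f lam| * 3 ^ p = (3 : ℝ) ^ p * (b ^ p * |f lam|) := by ring
      _ = (3 * b) ^ p * |f lam| := hmul
      _ ≤ (supnorm lam - 1 / 2) ^ p * |f lam| := h3b
      _ ≤ M := hle
  have hcard : ((Fintype.piFinset (fun _ : Fin d => ({-1, 0, 1} : Finset ℤ))).card : ℝ)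
      = (3 : ℝ) ^ (d : ℕ) := by
    rw [Fintype.card_piFinset]
    push_cast
    norm_num
  calc b ^ p * |coarsen f ℓ|
      ≤ b ^ p * ∑ μ ∈ Fintype.piFinset (fun _ : Fin d => ({-1, 0, 1} : Finset ℤ)),
          |f (fun i => 3 * ℓ i + μ i)| := by
        apply mul_le_mul_of_nonneg_left _ (Real.rpow_nonneg hbpos.le p)
        exact Finset.abs_sum_le_sum_abs _ _
    _ = ∑ μ ∈ Fintype.piFinset (fun _ : Fin d => ({-1, 0, 1} : Finset ℤ)),
          b ^ p * |f (fun i => 3 * ℓ i + μ i)| := Finset.mul_sum _ _ _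
    _ ≤ ∑ _μ ∈ Fintype.piFinset (fun _ : Fin d => ({-1, 0, 1} : Finset ℤ)),
          3 ^ (-p) * M := Finset.sum_le_sum key
    _ = ((Fintype.piFinset (fun _ : Fin d => ({-1, 0, 1} : Finset ℤ))).card : ℝ)
          * (3 ^ (-p) * M) := by rw [Finset.sum_const, nsmul_eq_mul]
    _ = (3 : ℝ) ^ (d : ℕ) * (3 ^ (-p) * M) := by rw [hcard]
    _ = 3 ^ ((d : ℝ) - p) * M := by
        rw [← Real.rpow_natCast (3 : ℝ) d, ← mul_assoc,
          ← Real.rpow_add (by norm_num : (0:ℝ) < 3), sub_eq_add_neg]
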